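/- Every model of DB₀ has a proper end extension that is again a model of DB₀; that is, for every L_∈-structure M ⊨ DB₀ there is an L_∈-structure N ⊨ DB₀ with M a proper substructure of N such that for all m ∈ M and a ∈ N, if N ⊨ a ∈ m then a ∈ M. -/

import Mathlib

/- A deep embedding of the first-order language of set theory L_∈ = {∈, =},
   with named variables indexed by ℕ. -/

namespace FOSet

/-- Formulas of L_∈ with variables indexed by ℕ. -/
inductive Fml : Type
  | mem : ℕ → ℕ → Fml
  | eq  : ℕ → ℕ → Fml
  | not : Fml → Fml
  | and : Fml → Fml → Fml
  | or  : Fml → Fml → Fml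
  | imp : Fml → Fml → Fml
  | all : ℕ → Fml → Fml
  | ex  : ℕ → Fml → Fml

namespace Fml

/-- Free variables of a formula. -/
def fv : Fml → Set ℕ
  | mem i j => {i, j}
  | eq i j  => {i, j}
  | not φ   => φ.fv
  | and φ ψ => φ.fv ∪ ψ.fv
  | or φ ψ  => φ.fv ∪ ψ.fv
  | imp φ ψ => φ.fv ∪ ψ.fv
  | all i φ => φ.fv \ {i}
  | ex i φ  => φ.fv \ {i}

end Fml

/-- Satisfaction, in the substructure of `(N, E)` with domain `S`, of a formula
under a valuation `v` : quantifiers range over `S`. -/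
def SatIn {N : Type} (E : N → N → Prop) (S : Set N) : (ℕ → N) → Fml → Prop
  | v, .mem i j => E (v i) (v j)
  | v, .eq i j  => v i = v j
  | v, .not φ   => ¬ SatIn E S v φ
  | v, .and φ ψ => SatIn E S v φ ∧ SatIn E S v ψ
  | v, .or φ ψ  => SatIn E S v φ ∨ SatIn E S v ψ
  | v, .imp φ ψ => SatIn E S v φ → SatIn E S v ψ
  | v, .all i φ => ∀ a ∈ S, SatIn E S (Function.update v i a) φ
  | v, .ex i φ  => ∃ a ∈ S, SatIn E S (Function.update v i a) φ

/-- Satisfaction in the full structure `(N, E)`. -/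
def Sat {N : Type} (E : N → N → Prop) (v : ℕ → N) (φ : Fml) : Prop :=
  SatIn E Set.univ v φ

/-- Δ₀ (= Σ₀ = Π₀) formulas: every quantifier is bounded, i.e. of the form
`∀ x ∈ y` or `∃ x ∈ y`. -/
inductive IsDelta0 : Fml → Prop
  | mem (i j : ℕ) : IsDelta0 (Fml.mem i j)
  | eq (i j : ℕ)  : IsDelta0 (Fml.eq i j)
  | not {φ} : IsDelta0 φ → IsDelta0 φ.not
  | and {φ ψ} : IsDelta0 φ → IsDelta0 ψ → IsDelta0 (φ.and ψ)
  | or {φ ψ}  : IsDelta0 φ → IsDelta0 ψ → IsDelta0 (φ.or ψ)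
  | imp {φ ψ} : IsDelta0 φ → IsDelta0 ψ → IsDelta0 (φ.imp ψ)
  | ball {i j : ℕ} {φ} : i ≠ j → IsDelta0 φ →
      IsDelta0 (Fml.all i ((Fml.mem i j).imp φ))
  | bex {i j : ℕ} {φ} : i ≠ j → IsDelta0 φ →
      IsDelta0 (Fml.ex i ((Fml.mem i j).and φ))

/-- The Lévy hierarchy: `(levels n).1` is the class of Σ_n formulas and
`(levels n).2` the class of Π_n formulas. -/
def levels : ℕ → (Fml → Prop) × (Fml → Prop)
  | 0 => (IsDelta0, IsDelta0)
  | n + 1 =>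
      (fun φ => ∃ i ψ, (levels n).2 ψ ∧ φ = Fml.ex i ψ,
       fun φ => ∃ i ψ, (levels n).1 ψ ∧ φ = Fml.all i ψ)

def IsSigma (n : ℕ) : Fml → Prop := (levels n).1

def IsPi (n : ℕ) : Fml → Prop := (levels n).2

variable {M N : Type}

/-- `p` is the (Kuratowski) pair `{a, b}` in the sense of `E`. -/
def IsPairOf (E : M → M → Prop) (p a b : M) : Prop :=
  ∀ w, E w p ↔ (w = a ∨ w = b)

/-- `z` is the ordered pair `(a, b)` (Kuratowski) in the sense of `E`. -/
def IsOPairOf (E : M → M → Prop) (z a b : M) : Prop :=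
  ∃ s t, IsPairOf E s a a ∧ IsPairOf E t a b ∧ IsPairOf E z s t

/-- Valuation sending variable 0 to `x` and every other variable to `y`;
used for formulas φ(x, y) with free variables among {0, 1}. -/
def val2 (x y : M) : ℕ → M := fun k => if k = 0 then x else y

/-- Valuation sending 0 ↦ x, 1 ↦ y, everything else ↦ v;
used for formulas φ(x, y, v) with free variables among {0, 1, 2}. -/
def val3 (x y v : M) : ℕ → M := fun k => if k = 0 then x else if k = 1 then y else v

/-- `M ⊨ Sep(φ)` for φ = φ(x, v) (x is variable 0, v is variable 1):
∀v∀p∃q∀x(x∈q ↔ x∈p ∧ φ(x,v)). -/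
def SepAx (E : M → M → Prop) (φ : Fml) : Prop :=
  ∀ v p : M, ∃ q : M, ∀ x : M, E x q ↔ (E x p ∧ Sat E (val2 x v) φ)

/-- `M ⊨ Sep⁻(φ)` for a parameter-free φ = φ(x) (x is variable 0). -/
def SepMinusAx (E : M → M → Prop) (φ : Fml) : Prop :=
  ∀ p : M, ∃ q : M, ∀ x : M, E x q ↔ (E x p ∧ Sat E (fun _ => x) φ)

/-- `(M, E) ⊨ DB₀`: extensionality, empty set, pairing, union, cartesian
product, and Δ₀ separation. -/
def SatDB0 (E : M → M → Prop) : Prop :=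
  (∀ a b : M, (∀ x, E x a ↔ E x b) → a = b) ∧
  (∃ e : M, ∀ x, ¬ E x e) ∧
  (∀ a b : M, ∃ p, IsPairOf E p a b) ∧
  (∀ a : M, ∃ u, ∀ x, E x u ↔ ∃ y, E y a ∧ E x y) ∧
  (∀ a b : M, ∃ c, ∀ z, E z c ↔ ∃ x y, E x a ∧ E y b ∧ IsOPairOf E z x y) ∧
  (∀ φ, IsDelta0 φ → φ.fv ⊆ {0, 1} → SepAx E φ)

/-- `M ⊨ Coll(φ)` for φ = φ(x, y, v) (x = var 0, y = var 1, v = var 2):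
∀v∀p(∀x∈p ∃y φ → ∃q ∀x∈p ∃y∈q φ). -/
def CollAx (E : M → M → Prop) (φ : Fml) : Prop :=
  ∀ v p : M, (∀ x, E x p → ∃ y, Sat E (val3 x y v) φ) →
    ∃ q, ∀ x, E x p → ∃ y, E y q ∧ Sat E (val3 x y v) φ

/-- `M ⊨ Coll_s(φ)`: ∀v∀p∃q∀x∈p(∃y φ ↔ ∃y∈q φ). -/
def CollSAx (E : M → M → Prop) (φ : Fml) : Prop :=
  ∀ v p : M, ∃ q, ∀ x, E x p →
    ((∃ y, Sat E (val3 x y v) φ) ↔ ∃ y, E y q ∧ Sat E (val3 x y v) φ)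

/-- `M ⊨ Coll_w(φ)`: ∀v(∀x∃y φ → ∀p∃q∀x∈p∃y∈q φ). -/
def CollWAx (E : M → M → Prop) (φ : Fml) : Prop :=
  ∀ v : M, (∀ x, ∃ y, Sat E (val3 x y v) φ) →
    ∀ p, ∃ q, ∀ x, E x p → ∃ y, E y q ∧ Sat E (val3 x y v) φ

/-- `M ⊨ Coll⁻(φ)` for a parameter-free φ = φ(x, y) (x = var 0, y = var 1). -/
def CollMinusAx (E : M → M → Prop) (φ : Fml) : Prop :=
  ∀ p : M, (∀ x, E x p → ∃ y, Sat E (val2 x y) φ) →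
    ∃ q, ∀ x, E x p → ∃ y, E y q ∧ Sat E (val2 x y) φ

/-- `M ⊨ Coll_w⁻(φ)` for a parameter-free φ = φ(x, y). -/
def CollWMinusAx (E : M → M → Prop) (φ : Fml) : Prop :=
  (∀ x : M, ∃ y, Sat E (val2 x y) φ) →
    ∀ p, ∃ q, ∀ x, E x p → ∃ y, E y q ∧ Sat E (val2 x y) φ

/-- `M ⊨ Coll_s⁻(φ)` for a parameter-free φ = φ(x, y). -/
def CollSMinusAx (E : M → M → Prop) (φ : Fml) : Prop :=
  ∀ p : M, ∃ q, ∀ x, E x p →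
    ((∃ y, Sat E (val2 x y) φ) ↔ ∃ y, E y q ∧ Sat E (val2 x y) φ)

/- Schemas over a class Γ of formulas. -/

def CollScheme (E : M → M → Prop) (Γ : Fml → Prop) : Prop :=
  ∀ φ, Γ φ → φ.fv ⊆ {0, 1, 2} → CollAx E φ

def CollSScheme (E : M → M → Prop) (Γ : Fml → Prop) : Prop :=
  ∀ φ, Γ φ → φ.fv ⊆ {0, 1, 2} → CollSAx E φ

def CollWScheme (E : M → M → Prop) (Γ : Fml → Prop) : Prop :=
  ∀ φ, Γ φ → φ.fv ⊆ {0, 1, 2} → CollWAx E φ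

def CollMinusScheme (E : M → M → Prop) (Γ : Fml → Prop) : Prop :=
  ∀ φ, Γ φ → φ.fv ⊆ {0, 1} → CollMinusAx E φ

def CollWMinusScheme (E : M → M → Prop) (Γ : Fml → Prop) : Prop :=
  ∀ φ, Γ φ → φ.fv ⊆ {0, 1} → CollWMinusAx E φ

def CollSMinusScheme (E : M → M → Prop) (Γ : Fml → Prop) : Prop :=
  ∀ φ, Γ φ → φ.fv ⊆ {0, 1} → CollSMinusAx E φ

def SepScheme (E : M → M → Prop) (Γ : Fml → Prop) : Prop :=
  ∀ φ, Γ φ → φ.fv ⊆ {0, 1} → SepAx E φ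

def SepMinusScheme (E : M → M → Prop) (Γ : Fml → Prop) : Prop :=
  ∀ φ, Γ φ → φ.fv ⊆ {0} → SepMinusAx E φ

/- Extensions. We present an extension `M ⊆ N` by an embedding `f : M → N`. -/

/-- `f` embeds `(M, EM)` as a substructure of `(N, EN)`. -/
def SubStr (EM : M → M → Prop) (EN : N → N → Prop) (f : M → N) : Prop :=
  Function.Injective f ∧ ∀ a b : M, EM a b ↔ EN (f a) (f b)

/-- `f : M → N` is a (fully) elementary embedding. -/
def ElemEmb (EM : M → M → Prop) (EN : N → N → Prop) (f : M → N) : Prop :=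
  ∀ (φ : Fml) (v : ℕ → M), Sat EM v φ ↔ Sat EN (f ∘ v) φ

/-- `f : M → N` is a Σ_n-elementary embedding (M ≺_{Σ_n} N). -/
def SigmaElemEmb (n : ℕ) (EM : M → M → Prop) (EN : N → N → Prop) (f : M → N) : Prop :=
  ∀ φ, IsSigma n φ → ∀ v : ℕ → M, Sat EM v φ ↔ Sat EN (f ∘ v) φ

/-- `f : M → N` is a Δ₀-elementary embedding (M ≺_{Δ₀} N). -/
def Delta0ElemEmb (EM : M → M → Prop) (EN : N → N → Prop) (f : M → N) : Prop :=
  ∀ φ, IsDelta0 φ → ∀ v : ℕ → M, Sat EM v φ ↔ Sat EN (f ∘ v) φ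

/-- The convex hull M* of (the image of) M in N:
{a ∈ N : N ⊨ a ∈ m for some m ∈ M}. -/
def hull (EN : N → N → Prop) (f : M → N) : Set N := {a | ∃ m : M, EN a (f m)}

/-- The substructure of `N` with domain `S` is a Σ_n-elementary substructure of
`N` (S ≺_{Σ_n} N). -/
def SigmaElemInTop (n : ℕ) (EN : N → N → Prop) (S : Set N) : Prop :=
  ∀ φ, IsSigma n φ → ∀ v : ℕ → N, (∀ k, v k ∈ S) → (SatIn EN S v φ ↔ Sat EN v φ)

/-- The substructure of `N` with domain `S` is a fully elementary substructure. -/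
def ElemInTop (EN : N → N → Prop) (S : Set N) : Prop :=
  ∀ (φ : Fml) (v : ℕ → N), (∀ k, v k ∈ S) → (SatIn EN S v φ ↔ Sat EN v φ)

/-- `f` is a Σ_n-elementary embedding of `M` into the substructure of `N` with
domain `S` (e.g. M ≺_{Σ_n} M*). -/
def SigmaElemEmbInto (n : ℕ) (EM : M → M → Prop) (EN : N → N → Prop) (f : M → N)
    (S : Set N) : Prop :=
  ∀ φ, IsSigma n φ → ∀ v : ℕ → M, Sat EM v φ ↔ SatIn EN S (f ∘ v) φ

/-- `f` is a fully elementary embedding of `M` into the substructure of `N`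
with domain `S`. -/
def ElemEmbInto (EM : M → M → Prop) (EN : N → N → Prop) (f : M → N) (S : Set N) : Prop :=
  ∀ (φ : Fml) (v : ℕ → M), Sat EM v φ ↔ SatIn EN S (f ∘ v) φ

/-- The extension presented by `f` is an end extension. -/
def IsEndEmb (EN : N → N → Prop) (f : M → N) : Prop :=
  ∀ (m : M) (a : N), EN a (f m) → ∃ m', f m' = a

/-- The extension presented by `f` is cofinal. -/
def Cofinal (EN : N → N → Prop) (f : M → N) : Prop :=
  ∀ a : N, ∃ m : M, EN a (f m)

/-- `a` is a transitive set in the sense of `(N, EN)`. -/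
def TransIn (EN : N → N → Prop) (a : N) : Prop :=
  ∀ x, EN x a → ∀ y, EN y x → EN y a

/-- The extension presented by `f` is taller. -/
def Taller (EN : N → N → Prop) (f : M → N) : Prop :=
  ∃ a : N, ∀ m : M, EN (f m) a

/-- The extension presented by `f` is taller*. -/
def TallerStar (EN : N → N → Prop) (f : M → N) : Prop :=
  ∃ a : N, (∀ m : M, EN (f m) a) ∧ TransIn EN a

/-- Property end_n: for every elementary extension N of M, M* ≺_{Σ_n} N. -/
def HasEnd (n : ℕ) (EM : M → M → Prop) : Prop :=
  ∀ (N : Type) (EN : N → N → Prop) (f : M → N), ElemEmb EM EN f →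
    SigmaElemInTop n EN (hull EN f)

/-- Property cof_n: for every elementary extension N of M, M ≺_{Σ_n} M*. -/
def HasCof (n : ℕ) (EM : M → M → Prop) : Prop :=
  ∀ (N : Type) (EN : N → N → Prop) (f : M → N), ElemEmb EM EN f →
    SigmaElemEmbInto n EM EN f (hull EN f)

/-- Property COF_n: for every Δ₀-elementary cofinal extension N of M with
N ⊨ DB₀, M ≺_{Σ_n} N. -/
def HasCOF (n : ℕ) (EM : M → M → Prop) : Prop :=
  ∀ (N : Type) (EN : N → N → Prop) (f : M → N), SatDB0 EN →
    Delta0ElemEmb EM EN f → Cofinal EN f → SigmaElemEmb n EM EN f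

/-- TCo: every set is an element of some transitive set. -/
def SatTCo (E : M → M → Prop) : Prop :=
  ∀ a : M, ∃ t, E a t ∧ TransIn E t

/-- `a` is an ordinal in the sense of `(M, E)`: a transitive set linearly
ordered by `E`. -/
def OrdIn (E : M → M → Prop) (a : M) : Prop :=
  TransIn E a ∧ ∀ x y, E x a → E y a → (E x y ∨ x = y ∨ E y x)

/-- The formula φ(p, α, v) (p = var 0, α = var 1, v = var 2), with parameter
`v ∈ M`, defines a resolution on `(M, E)`. -/
def IsResolution (E : M → M → Prop) (φ : Fml) (v : M) : Prop :=
  φ.fv ⊆ {0, 1, 2} ∧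
  (∀ α, OrdIn E α → ∃! p, Sat E (val3 p α v) φ) ∧
  (∀ α β p q, E α β → Sat E (val3 p α v) φ → Sat E (val3 q β v) φ →
    ∀ x, E x p → E x q) ∧
  (∀ x, ∃ α, OrdIn E α ∧ ∀ p, Sat E (val3 p α v) φ → E x p)

end FOSet

namespace FOSet


/- ===== Auxiliary construction ===== -/

abbrev Idx (M : Type) := ℕ × (ℕ → M)

inductive VV (M : Type) : Type
  | old : M → VV M
  | mk : Set (Idx M) → (Idx M → VV M) → VV M

noncomputable def rk {M : Type} : VV M → Ordinal.{0}
  | .old _ => 0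
  | .mk _ g => (⨆ i, rk (g i)) + 1

lemma rk_lt {M : Type} (s : Set (Idx M)) (g : Idx M → VV M) (i : Idx M) :
    rk (g i) < rk (VV.mk s g) := by
  have h : rk (g i) ≤ ⨆ j, rk (g j) := Ordinal.le_iSup (fun j => rk (g j)) i
  calc rk (g i) ≤ ⨆ j, rk (g j) := h
    _ < (⨆ j, rk (g j)) + 1 := Order.lt_add_one_iff.mpr le_rfl
    _ = rk (VV.mk s g) := by rw [rk]

lemma rk_pos {M : Type} (s : Set (Idx M)) (g : Idx M → VV M) :
    (0 : Ordinal) < rk (VV.mk s g) := by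
  rw [rk]; exact lt_of_le_of_lt zero_le (Order.lt_add_one_iff.mpr le_rfl)

lemma rk_old {M : Type} (m : M) : rk (VV.old m) = 0 := rfl

noncomputable instance : WellFoundedRelation Ordinal.{0} := ⟨(· < ·), Ordinal.lt_wf⟩

variable {M : Type}

def ee (EM : M → M → Prop) : VV M → VV M → Prop
  | .old a, .old b => a = b
  | .old a, .mk t h =>
      (∀ x, EM x a → ∃ j ∈ t, ee EM (.old x) (h j)) ∧
      (∀ j ∈ t, ∃ x, EM x a ∧ ee EM (.old x) (h j))
  | .mk s g, .old b =>
      (∀ i ∈ s, ∃ y, EM y b ∧ ee EM (g i) (.old y)) ∧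
      (∀ y, EM y b → ∃ i ∈ s, ee EM (g i) (.old y))
  | .mk s g, .mk t h =>
      (∀ i ∈ s, ∃ j ∈ t, ee EM (g i) (h j)) ∧
      (∀ j ∈ t, ∃ i ∈ s, ee EM (g i) (h j))
termination_by a b => max (rk a) (rk b)
decreasing_by
  all_goals
    refine max_lt ?_ ?_ <;>
    first
      | exact lt_max_of_lt_right (rk_lt _ _ _)
      | exact lt_max_of_lt_left (rk_lt _ _ _)
      | exact lt_max_of_lt_right (by rw [rk_old]; exact rk_pos _ _)
      | exact lt_max_of_lt_left (by rw [rk_old]; exact rk_pos _ _)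

variable {EM : M → M → Prop}

lemma ee_old_old {a b : M} : ee EM (.old a) (.old b) ↔ a = b := by rw [ee]

lemma ee_old_mk {a : M} {t : Set (Idx M)} {h : Idx M → VV M} :
    ee EM (.old a) (.mk t h) ↔
      (∀ x, EM x a → ∃ j ∈ t, ee EM (.old x) (h j)) ∧
      (∀ j ∈ t, ∃ x, EM x a ∧ ee EM (.old x) (h j)) := by rw [ee]

lemma ee_mk_old {b : M} {s : Set (Idx M)} {g : Idx M → VV M} :
    ee EM (.mk s g) (.old b) ↔
      (∀ i ∈ s, ∃ y, EM y b ∧ ee EM (g i) (.old y)) ∧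
      (∀ y, EM y b → ∃ i ∈ s, ee EM (g i) (.old y)) := by rw [ee]

lemma ee_mk_mk {s t : Set (Idx M)} {g h : Idx M → VV M} :
    ee EM (.mk s g) (.mk t h) ↔
      (∀ i ∈ s, ∃ j ∈ t, ee EM (g i) (h j)) ∧
      (∀ j ∈ t, ∃ i ∈ s, ee EM (g i) (h j)) := by rw [ee]

theorem ee_refl : ∀ (a : VV M), ee EM a a := by
  intro a
  induction a with
  | old m => rw [ee_old_old]
  | mk s g ih =>
      rw [ee_mk_mk]
      exact ⟨fun i hi => ⟨i, hi, ih i⟩, fun i hi => ⟨i, hi, ih i⟩⟩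

theorem ee_symm : ∀ (a b : VV M), ee EM a b → ee EM b a
  | .old a, .old b, h => by rw [ee_old_old] at h ⊢; exact h.symm
  | .old a, .mk t h, hh => by
      rw [ee_old_mk] at hh; rw [ee_mk_old]
      refine ⟨fun j hj => ?_, fun x hx => ?_⟩
      · obtain ⟨x, hx, he⟩ := hh.2 j hj; exact ⟨x, hx, ee_symm _ _ he⟩
      · obtain ⟨j, hj, he⟩ := hh.1 x hx; exact ⟨j, hj, ee_symm _ _ he⟩
  | .mk s g, .old b, hh => by
      rw [ee_mk_old] at hh; rw [ee_old_mk]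
      refine ⟨fun y hy => ?_, fun i hi => ?_⟩
      · obtain ⟨i, hi, he⟩ := hh.2 y hy; exact ⟨i, hi, ee_symm _ _ he⟩
      · obtain ⟨y, hy, he⟩ := hh.1 i hi; exact ⟨y, hy, ee_symm _ _ he⟩
  | .mk s g, .mk t h, hh => by
      rw [ee_mk_mk] at hh ⊢
      refine ⟨fun j hj => ?_, fun i hi => ?_⟩
      · obtain ⟨i, hi, he⟩ := hh.2 j hj; exact ⟨i, hi, ee_symm _ _ he⟩
      · obtain ⟨j, hj, he⟩ := hh.1 i hi; exact ⟨j, hj, ee_symm _ _ he⟩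
termination_by a b => max (rk a) (rk b)
decreasing_by
  all_goals
    try simp only [rk_old]
    refine max_lt ?_ ?_ <;>
    first
      | exact lt_max_of_lt_right (rk_lt _ _ _)
      | exact lt_max_of_lt_left (rk_lt _ _ _)
      | exact lt_max_of_lt_right (rk_pos _ _)
      | exact lt_max_of_lt_left (rk_pos _ _)

theorem ee_trans (hext : ∀ a b : M, (∀ x, EM x a ↔ EM x b) → a = b) :
    ∀ (a b c : VV M), ee EM a b → ee EM b c → ee EM a c
  | .old _, .old _, _, h1, h2 => by
      rw [ee_old_old] at h1; exact h1 ▸ h2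
  | .mk _ _, .old _, .old _, h1, h2 => by
      rw [ee_old_old] at h2; exact h2 ▸ h1
  | .old a, .mk t h, .old c, h1, h2 => by
      rw [ee_old_mk] at h1; rw [ee_mk_old] at h2; rw [ee_old_old]
      apply hext
      intro x
      constructor
      · intro hx
        obtain ⟨j, hj, he⟩ := h1.1 x hx
        obtain ⟨y, hy, he2⟩ := h2.1 j hj
        have h3 := ee_trans hext (.old x) (h j) (.old y) he he2
        rw [ee_old_old] at h3; exact h3 ▸ hy
      · intro hx
        obtain ⟨j, hj, he2⟩ := h2.2 x hx
        obtain ⟨y, hy, he⟩ := h1.2 j hj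
        have h3 := ee_trans hext (.old y) (h j) (.old x) he he2
        rw [ee_old_old] at h3; exact h3 ▸ hy
  | .old a, .mk t h, .mk u k, h1, h2 => by
      rw [ee_old_mk] at h1; rw [ee_mk_mk] at h2; rw [ee_old_mk]
      constructor
      · intro x hx
        obtain ⟨j, hj, he⟩ := h1.1 x hx
        obtain ⟨l, hl, he2⟩ := h2.1 j hj
        exact ⟨l, hl, ee_trans hext (.old x) (h j) (k l) he he2⟩
      · intro l hl
        obtain ⟨j, hj, he2⟩ := h2.2 l hl
        obtain ⟨x, hx, he⟩ := h1.2 j hj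
        exact ⟨x, hx, ee_trans hext (.old x) (h j) (k l) he he2⟩
  | .mk s g, .old b, .mk t h, h1, h2 => by
      rw [ee_mk_old] at h1; rw [ee_old_mk] at h2; rw [ee_mk_mk]
      constructor
      · intro i hi
        obtain ⟨y, hy, he⟩ := h1.1 i hi
        obtain ⟨j, hj, he2⟩ := h2.1 y hy
        exact ⟨j, hj, ee_trans hext (g i) (.old y) (h j) he he2⟩
      · intro j hj
        obtain ⟨y, hy, he2⟩ := h2.2 j hj
        obtain ⟨i, hi, he⟩ := h1.2 y hy
        exact ⟨i, hi, ee_trans hext (g i) (.old y) (h j) he he2⟩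
  | .mk s g, .mk t h, .old c, h1, h2 => by
      rw [ee_mk_mk] at h1; rw [ee_mk_old] at h2 ⊢
      constructor
      · intro i hi
        obtain ⟨j, hj, he⟩ := h1.1 i hi
        obtain ⟨y, hy, he2⟩ := h2.1 j hj
        exact ⟨y, hy, ee_trans hext (g i) (h j) (.old y) he he2⟩
      · intro y hy
        obtain ⟨j, hj, he2⟩ := h2.2 y hy
        obtain ⟨i, hi, he⟩ := h1.2 j hj
        exact ⟨i, hi, ee_trans hext (g i) (h j) (.old y) he he2⟩
  | .mk s g, .mk t h, .mk u k, h1, h2 => by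
      rw [ee_mk_mk] at h1 h2 ⊢
      constructor
      · intro i hi
        obtain ⟨j, hj, he⟩ := h1.1 i hi
        obtain ⟨l, hl, he2⟩ := h2.1 j hj
        exact ⟨l, hl, ee_trans hext (g i) (h j) (k l) he he2⟩
      · intro l hl
        obtain ⟨j, hj, he2⟩ := h2.2 l hl
        obtain ⟨i, hi, he⟩ := h1.2 j hj
        exact ⟨i, hi, ee_trans hext (g i) (h j) (k l) he he2⟩
termination_by a b c => max (rk a) (max (rk b) (rk c))
decreasing_by
  all_goals
    try simp only [rk_old]
    refine max_lt ?_ (max_lt ?_ ?_) <;>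
    first
      | exact lt_max_of_lt_left (rk_lt _ _ _)
      | exact lt_max_of_lt_right (lt_max_of_lt_left (rk_lt _ _ _))
      | exact lt_max_of_lt_right (lt_max_of_lt_right (rk_lt _ _ _))
      | exact lt_max_of_lt_left (rk_pos _ _)
      | exact lt_max_of_lt_right (lt_max_of_lt_left (rk_pos _ _))
      | exact lt_max_of_lt_right (lt_max_of_lt_right (rk_pos _ _))

/-- Membership on `VV`. -/
def memV (EM : M → M → Prop) : VV M → VV M → Prop
  | x, .old m => ∃ m', EM m' m ∧ ee EM x (.old m')
  | x, .mk s g => ∃ i ∈ s, ee EM x (g i)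

lemma memV_old {x : VV M} {m : M} :
    memV EM x (.old m) ↔ ∃ m', EM m' m ∧ ee EM x (.old m') := Iff.rfl

lemma memV_mk {x : VV M} {s : Set (Idx M)} {g : Idx M → VV M} :
    memV EM x (.mk s g) ↔ ∃ i ∈ s, ee EM x (g i) := Iff.rfl

variable (hext : ∀ a b : M, (∀ x, EM x a ↔ EM x b) → a = b)

include hext in
lemma memV_congr_left {x x' t : VV M} (h : ee EM x x') : memV EM x t ↔ memV EM x' t := by
  cases t with
  | old m =>
      simp only [memV_old]
      exact ⟨fun ⟨m', hm, he⟩ => ⟨m', hm, ee_trans hext _ _ _ (ee_symm _ _ h) he⟩,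
             fun ⟨m', hm, he⟩ => ⟨m', hm, ee_trans hext _ _ _ h he⟩⟩
  | mk s g =>
      simp only [memV_mk]
      exact ⟨fun ⟨i, hi, he⟩ => ⟨i, hi, ee_trans hext _ _ _ (ee_symm _ _ h) he⟩,
             fun ⟨i, hi, he⟩ => ⟨i, hi, ee_trans hext _ _ _ h he⟩⟩

include hext in
lemma memV_congr_right {x t t' : VV M} (h : ee EM t t') : memV EM x t ↔ memV EM x t' := by
  cases t with
  | old m =>
      cases t' with
      | old m' => rw [ee_old_old] at h; rw [h]
      | mk u k =>
          rw [ee_old_mk] at h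
          simp only [memV_old, memV_mk]
          constructor
          · rintro ⟨m', hm, he⟩
            obtain ⟨j, hj, he2⟩ := h.1 m' hm
            exact ⟨j, hj, ee_trans hext _ _ _ he he2⟩
          · rintro ⟨j, hj, he⟩
            obtain ⟨m', hm, he2⟩ := h.2 j hj
            exact ⟨m', hm, ee_trans hext _ _ _ he (ee_symm _ _ he2)⟩
  | mk s g =>
      cases t' with
      | old m' =>
          rw [ee_mk_old] at h
          simp only [memV_old, memV_mk]
          constructor
          · rintro ⟨i, hi, he⟩
            obtain ⟨y, hy, he2⟩ := h.1 i hi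
            exact ⟨y, hy, ee_trans hext _ _ _ he he2⟩
          · rintro ⟨m', hm, he⟩
            obtain ⟨i, hi, he2⟩ := h.2 m' hm
            exact ⟨i, hi, ee_trans hext _ _ _ he (ee_symm _ _ he2)⟩
      | mk u k =>
          rw [ee_mk_mk] at h
          simp only [memV_mk]
          constructor
          · rintro ⟨i, hi, he⟩
            obtain ⟨j, hj, he2⟩ := h.1 i hi
            exact ⟨j, hj, ee_trans hext _ _ _ he he2⟩
          · rintro ⟨j, hj, he⟩
            obtain ⟨i, hi, he2⟩ := h.2 j hj
            exact ⟨i, hi, ee_trans hext _ _ _ he (ee_symm _ _ he2)⟩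

include hext in
lemma extV {a b : VV M} (h : ∀ x, memV EM x a ↔ memV EM x b) : ee EM a b := by
  cases a with
  | old m =>
      have hmem : ∀ x : M, memV EM (VV.old x) (VV.old m) ↔ EM x m := by
        intro x
        simp only [memV_old]
        constructor
        · rintro ⟨m', hm, he⟩; rw [ee_old_old] at he; exact he ▸ hm
        · intro hx; exact ⟨x, hx, ee_refl _⟩
      cases b with
      | old m' =>
          rw [ee_old_old]
          apply hext
          intro x
          rw [← hmem x, h (VV.old x)]
          simp only [memV_old]
          constructor
          · rintro ⟨y, hy, he⟩; rw [ee_old_old] at he; exact he ▸ hy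
          · intro hx; exact ⟨x, hx, ee_refl _⟩
      | mk u k =>
          rw [ee_old_mk]
          constructor
          · intro x hx
            have : memV EM (VV.old x) (VV.mk u k) := (h _).mp ((hmem x).mpr hx)
            exact this
          · intro j hj
            have : memV EM (k j) (VV.old m) := (h _).mpr ⟨j, hj, ee_refl _⟩
            obtain ⟨m', hm, he⟩ := this
            exact ⟨m', hm, ee_symm _ _ he⟩
  | mk s g =>
      cases b with
      | old m' =>
          rw [ee_mk_old]
          constructor
          · intro i hi
            have : memV EM (g i) (VV.old m') := (h _).mp ⟨i, hi, ee_refl _⟩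
            exact this
          · intro y hy
            have : memV EM (VV.old y) (VV.mk s g) := (h _).mpr ⟨y, hy, ee_refl _⟩
            obtain ⟨i, hi, he⟩ := this
            exact ⟨i, hi, ee_symm _ _ he⟩
      | mk u k =>
          rw [ee_mk_mk]
          constructor
          · intro i hi
            exact (h _).mp ⟨i, hi, ee_refl _⟩
          · intro j hj
            obtain ⟨i, hi, he⟩ := (h _).mpr ⟨j, hj, ee_refl _⟩
            exact ⟨i, hi, ee_symm _ _ he⟩

/-- Index set of the members of a `VV`. -/
def idxV (EM : M → M → Prop) : VV M → Set (Idx M)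
  | .old m => {i | EM (i.2 0) m}
  | .mk s _ => s

/-- Enumeration of the members of a `VV`. -/
def elV : VV M → Idx M → VV M
  | .old _, i => .old (i.2 0)
  | .mk _ g, i => g i

lemma memV_iff_el {x a : VV M} :
    memV EM x a ↔ ∃ i ∈ idxV EM a, ee EM x (elV a i) := by
  cases a with
  | old m =>
      simp only [memV_old, idxV, elV]
      constructor
      · rintro ⟨m', hm, he⟩; exact ⟨(0, fun _ => m'), hm, he⟩
      · rintro ⟨i, hi, he⟩; exact ⟨i.2 0, hi, he⟩
  | mk s g => simp only [memV_mk, idxV, elV]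

lemma memV_el {a : VV M} {i : Idx M} (hi : i ∈ idxV EM a) : memV EM (elV a i) a :=
  memV_iff_el.mpr ⟨i, hi, ee_refl _⟩

/-- Unordered pair. -/
def pairV (a b : VV M) : VV M :=
  .mk Set.univ (fun i => if i.1 = 0 then a else b)

lemma memV_pairV (hne : Nonempty M) {x a b : VV M} :
    memV EM x (pairV a b) ↔ ee EM x a ∨ ee EM x b := by
  obtain ⟨m0⟩ := hne
  simp only [pairV, memV_mk, Set.mem_univ, true_and]
  constructor
  · rintro ⟨i, hi⟩
    by_cases h : i.1 = 0
    · rw [h] at hi; simp at hi; exact Or.inl hi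
    · simp [h] at hi; exact Or.inr hi
  · rintro (h | h)
    · exact ⟨(0, fun _ => m0), by simpa using h⟩
    · exact ⟨(1, fun _ => m0), by simpa using h⟩

/-- Ordered (Kuratowski) pair. -/
def opairV (a b : VV M) : VV M := pairV (pairV a a) (pairV a b)

/-- Union. -/
def unionV (EM : M → M → Prop) (pI : Idx M × Idx M ≃ Idx M) (a : VV M) : VV M :=
  .mk {k | (pI.symm k).1 ∈ idxV EM a ∧ (pI.symm k).2 ∈ idxV EM (elV a (pI.symm k).1)}
     (fun k => elV (elV a (pI.symm k).1) (pI.symm k).2)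

include hext in
lemma memV_unionV {pI : Idx M × Idx M ≃ Idx M} {a x : VV M} :
    memV EM x (unionV EM pI a) ↔ ∃ y, memV EM y a ∧ memV EM x y := by
  constructor
  · rintro ⟨k, ⟨h1, h2⟩, he⟩
    refine ⟨elV a (pI.symm k).1, memV_el h1, ?_⟩
    exact memV_iff_el.mpr ⟨(pI.symm k).2, h2, he⟩
  · rintro ⟨y, hy, hx⟩
    obtain ⟨i, hi, hey⟩ := memV_iff_el.mp hy
    have hx' : memV EM x (elV a i) := (memV_congr_right hext hey).mp hx
    obtain ⟨j, hj, hex⟩ := memV_iff_el.mp hx'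
    refine ⟨pI (i, j), ?_, ?_⟩
    · simp only [Set.mem_setOf_eq, Equiv.symm_apply_apply]; exact ⟨hi, hj⟩
    · simpa only [Equiv.symm_apply_apply] using hex

/-- Cartesian product. -/
def prodV (EM : M → M → Prop) (pI : Idx M × Idx M ≃ Idx M) (a b : VV M) : VV M :=
  .mk {k | (pI.symm k).1 ∈ idxV EM a ∧ (pI.symm k).2 ∈ idxV EM b}
     (fun k => opairV (elV a (pI.symm k).1) (elV b (pI.symm k).2))

lemma memV_prodV {pI : Idx M × Idx M ≃ Idx M} {a b z : VV M} :
    memV EM z (prodV EM pI a b) ↔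
      ∃ i ∈ idxV EM a, ∃ j ∈ idxV EM b, ee EM z (opairV (elV a i) (elV b j)) := by
  constructor
  · rintro ⟨k, ⟨h1, h2⟩, he⟩
    exact ⟨(pI.symm k).1, h1, (pI.symm k).2, h2, he⟩
  · rintro ⟨i, hi, j, hj, he⟩
    refine ⟨pI (i, j), ?_, ?_⟩
    · simp only [Set.mem_setOf_eq, Equiv.symm_apply_apply]; exact ⟨hi, hj⟩
    · simpa only [Equiv.symm_apply_apply] using he

/-- Separation. -/
def sepV (EM : M → M → Prop) (p : VV M) (P : VV M → Prop) : VV M :=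
  .mk {i | i ∈ idxV EM p ∧ P (elV p i)} (elV p)

include hext in
lemma memV_sepV {p x : VV M} {P : VV M → Prop}
    (hP : ∀ x y, ee EM x y → (P x ↔ P y)) :
    memV EM x (sepV EM p P) ↔ memV EM x p ∧ P x := by
  simp only [sepV, memV_mk, Set.mem_setOf_eq]
  constructor
  · rintro ⟨i, ⟨hi, hp⟩, he⟩
    exact ⟨memV_iff_el.mpr ⟨i, hi, he⟩, (hP _ _ he).mpr hp⟩
  · rintro ⟨hx, hp⟩
    obtain ⟨i, hi, he⟩ := memV_iff_el.mp hx
    exact ⟨i, ⟨hi, (hP _ _ he).mp hp⟩, he⟩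

/-- The "universe of M" as a new set. -/
def univV (M : Type) : VV M := .mk Set.univ (fun i => .old (i.2 0))

lemma exists_pI (M : Type) (hne : Nonempty M) : Nonempty (Idx M × Idx M ≃ Idx M) := by
  haveI := hne
  haveI : Infinite (Idx M) := by
    have : Nonempty (ℕ → M) := ⟨fun _ => hne.some⟩
    exact Prod.infinite_of_left
  have h : Cardinal.mk (Idx M × Idx M) = Cardinal.mk (Idx M) := by
    rw [Cardinal.mk_prod]
    simp only [Cardinal.lift_id]
    exact Cardinal.mul_eq_self (Cardinal.aleph0_le_mk _)
  exact Cardinal.eq.mp h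

def eeSetoid (EM : M → M → Prop) (hext : ∀ a b : M, (∀ x, EM x a ↔ EM x b) → a = b) :
    Setoid (VV M) :=
  ⟨ee EM, ⟨ee_refl, fun h => ee_symm _ _ h, fun h1 h2 => ee_trans hext _ _ _ h1 h2⟩⟩

variable (EM) in
def NN (hext : ∀ a b : M, (∀ x, EM x a ↔ EM x b) → a = b) : Type :=
  Quotient (eeSetoid EM hext)

variable (EM) in
def ENq (hext : ∀ a b : M, (∀ x, EM x a ↔ EM x b) → a = b) :
    NN EM hext → NN EM hext → Prop :=
  Quotient.lift₂ (memV EM)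
    (fun _ _ _ _ ha hb =>
      propext ((memV_congr_left hext ha).trans (memV_congr_right hext hb)))

variable (EM) in
def mkN (hext : ∀ a b : M, (∀ x, EM x a ↔ EM x b) → a = b) (a : VV M) : NN EM hext :=
  Quotient.mk (eeSetoid EM hext) a

variable {hext2 : ∀ a b : M, (∀ x, EM x a ↔ EM x b) → a = b}

lemma ENq_mk {a b : VV M} : ENq EM hext2 (mkN EM hext2 a) (mkN EM hext2 b) ↔ memV EM a b :=
  Iff.rfl

lemma mkN_eq_iff {a b : VV M} : mkN EM hext2 a = mkN EM hext2 b ↔ ee EM a b :=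
  ⟨Quotient.exact, fun h => Quotient.sound (α := VV M) (s := eeSetoid EM hext2) h⟩

lemma NN_ind {P : NN EM hext2 → Prop} (h : ∀ a, P (mkN EM hext2 a)) : ∀ x, P x :=
  fun x => Quotient.ind h x

lemma extN : ∀ a b : NN EM hext2, (∀ x, ENq EM hext2 x a ↔ ENq EM hext2 x b) → a = b := by
  apply NN_ind; intro a
  apply NN_ind (P := fun b => _ → mkN EM hext2 a = b)
  intro b h
  exact mkN_eq_iff.mpr (extV hext2 (fun x => h (mkN EM hext2 x)))


lemma pair_unique {α : Type} {E : α → α → Prop}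
    (hE : ∀ a b, (∀ x, E x a ↔ E x b) → a = b)
    {p p' a b : α} (h : IsPairOf E p a b) (h' : IsPairOf E p' a b) : p = p' :=
  hE _ _ (fun x => (h x).trans (h' x).symm)

lemma opair_unique {α : Type} {E : α → α → Prop}
    (hE : ∀ a b, (∀ x, E x a ↔ E x b) → a = b)
    {z z' a b : α} (h : IsOPairOf E z a b) (h' : IsOPairOf E z' a b) : z = z' := by
  obtain ⟨s, t, hs, ht, hz⟩ := h
  obtain ⟨s', t', hs', ht', hz'⟩ := h'
  have h1 : s = s' := pair_unique hE hs hs'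
  have h2 : t = t' := pair_unique hE ht ht'
  subst h1; subst h2
  exact pair_unique hE hz hz'

lemma isPairOf_mkN (hne : Nonempty M) (u v : VV M) :
    IsPairOf (ENq EM hext2) (mkN EM hext2 (pairV u v)) (mkN EM hext2 u) (mkN EM hext2 v) := by
  intro w
  obtain ⟨w', rfl⟩ := w.exists_rep
  exact (memV_pairV hne).trans (or_congr mkN_eq_iff.symm mkN_eq_iff.symm)

lemma isOPairOf_mkN (hne : Nonempty M) (u v : VV M) :
    IsOPairOf (ENq EM hext2) (mkN EM hext2 (opairV u v)) (mkN EM hext2 u) (mkN EM hext2 v) :=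
  ⟨mkN EM hext2 (pairV u u), mkN EM hext2 (pairV u v),
    isPairOf_mkN hne u u, isPairOf_mkN hne u v, isPairOf_mkN hne _ _⟩

lemma satDB0_ENq (hne : Nonempty M) (pI : Idx M × Idx M ≃ Idx M) :
    SatDB0 (ENq EM hext2) := by
  refine ⟨extN, ?_, ?_, ?_, ?_, ?_⟩
  · -- empty set
    refine ⟨mkN EM hext2 (.mk ∅ (fun i => .old (i.2 0))), ?_⟩
    apply NN_ind; intro x
    rintro ⟨i, hi, -⟩
    exact hi
  · -- pairing
    apply NN_ind; intro a
    apply NN_ind (P := fun b => ∃ p, IsPairOf (ENq EM hext2) p (mkN EM hext2 a) b); intro b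
    exact ⟨mkN EM hext2 (pairV a b), isPairOf_mkN hne a b⟩
  · -- union
    apply NN_ind; intro a
    refine ⟨mkN EM hext2 (unionV EM pI a), ?_⟩
    apply NN_ind; intro x
    have h := memV_unionV hext2 (pI := pI) (a := a) (x := x)
    refine (ENq_mk.trans h).trans ?_
    constructor
    · rintro ⟨y, hy, hx⟩; exact ⟨mkN EM hext2 y, hy, hx⟩
    · rintro ⟨y, hy, hx⟩
      obtain ⟨y', rfl⟩ := y.exists_rep
      exact ⟨y', hy, hx⟩
  · -- cartesian product
    apply NN_ind; intro a
    apply NN_ind (P := fun b => ∃ c, ∀ z, ENq EM hext2 z c ↔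
      ∃ x y, ENq EM hext2 x (mkN EM hext2 a) ∧ ENq EM hext2 y b ∧
        IsOPairOf (ENq EM hext2) z x y); intro b
    refine ⟨mkN EM hext2 (prodV EM pI a b), ?_⟩
    apply NN_ind; intro z
    refine (ENq_mk.trans (memV_prodV (pI := pI))).trans ?_
    constructor
    · rintro ⟨i, hi, j, hj, he⟩
      refine ⟨mkN EM hext2 (elV a i), mkN EM hext2 (elV b j), memV_el hi, memV_el hj, ?_⟩
      rw [show mkN EM hext2 z = mkN EM hext2 (opairV (elV a i) (elV b j)) from mkN_eq_iff.mpr he]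
      exact isOPairOf_mkN hne _ _
    · rintro ⟨x, y, hx, hy, hop⟩
      obtain ⟨x', rfl⟩ := x.exists_rep
      obtain ⟨y', rfl⟩ := y.exists_rep
      obtain ⟨i, hi, hex⟩ := memV_iff_el.mp hx
      obtain ⟨j, hj, hey⟩ := memV_iff_el.mp hy
      have h1 : IsOPairOf (ENq EM hext2) (mkN EM hext2 (opairV (elV a i) (elV b j)))
          (mkN EM hext2 x') (mkN EM hext2 y') := by
        rw [mkN_eq_iff.mpr hex, mkN_eq_iff.mpr hey]
        exact isOPairOf_mkN hne _ _
      have hz := opair_unique extN hop h1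
      exact ⟨i, hi, j, hj, mkN_eq_iff.mp hz⟩
  · -- separation (full, a fortiori Δ₀)
    intro φ _ _ v p
    obtain ⟨p', rfl⟩ := p.exists_rep
    refine ⟨mkN EM hext2
      (sepV EM p' (fun x => Sat (ENq EM hext2) (val2 (mkN EM hext2 x) v) φ)), ?_⟩
    apply NN_ind; intro x
    have hP : ∀ x y : VV M, ee EM x y →
        (Sat (ENq EM hext2) (val2 (mkN EM hext2 x) v) φ ↔
         Sat (ENq EM hext2) (val2 (mkN EM hext2 y) v) φ) := by
      intro x y he
      rw [mkN_eq_iff.mpr he]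
    exact memV_sepV hext2 hP

lemma no_universal (hsep : ∀ φ, IsDelta0 φ → φ.fv ⊆ {0, 1} → SepAx EM φ) :
    ¬ ∃ m : M, ∀ x, EM x m := by
  rintro ⟨m, hm⟩
  have h1 : IsDelta0 (Fml.not (Fml.mem 0 0)) := IsDelta0.not (IsDelta0.mem 0 0)
  have h2 : (Fml.not (Fml.mem 0 0)).fv ⊆ {0, 1} := by
    intro x hx
    simp only [Fml.fv] at hx
    rcases hx with h | h <;> exact Or.inl h
  obtain ⟨q, hq⟩ := hsep _ h1 h2 m m
  have h3 := hq q
  simp only [Sat, SatIn, val2, if_pos rfl] at h3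
  have h4 := hm q
  tauto

/-- Every model of DB₀ has a proper end extension that is again
a model of DB₀. -/
theorem exists_proper_end_extension (M : Type) (EM : M → M → Prop)
    (hM : SatDB0 EM) :
    ∃ (N : Type) (EN : N → N → Prop) (f : M → N),
      SatDB0 EN ∧ SubStr EM EN f ∧ ¬ Function.Surjective f ∧ IsEndEmb EN f := by
  obtain ⟨hext, hempty, hpairM, hunM, hprodM, hsepM⟩ := hM
  obtain ⟨e0, he0⟩ := hempty
  have hne : Nonempty M := ⟨e0⟩
  obtain ⟨pI⟩ := exists_pI M hne
  refine ⟨NN EM hext, ENq EM hext, fun m => mkN EM hext (.old m),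
    satDB0_ENq hne pI, ⟨?_, ?_⟩, ?_, ?_⟩
  · -- injectivity
    intro a b h
    have h' := mkN_eq_iff.mp h
    rwa [ee_old_old] at h'
  · -- membership preserved
    intro a b
    constructor
    · intro h
      exact (⟨a, h, ee_refl _⟩ : memV EM (.old a) (.old b))
    · intro h
      obtain ⟨m', hm, he⟩ := (h : memV EM (.old a) (.old b))
      rw [ee_old_old] at he
      exact he ▸ hm
  · -- not surjective
    intro hsurj
    obtain ⟨m, hm⟩ := hsurj (mkN EM hext (univV M))
    have he := mkN_eq_iff.mp hm
    simp only [univV] at he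
    rw [ee_old_mk] at he
    have hu : ∀ y : M, EM y m := by
      intro y
      obtain ⟨x, hx, he2⟩ := he.2 (0, fun _ => y) (Set.mem_univ _)
      rw [ee_old_old] at he2
      simp only [] at he2
      exact he2 ▸ hx
    exact no_universal hsepM ⟨m, hu⟩
  · -- end extension
    intro m a
    obtain ⟨a', rfl⟩ := a.exists_rep
    intro h
    obtain ⟨m', hm, he⟩ := (h : memV EM a' (.old m))
    exact ⟨m', mkN_eq_iff.mpr (ee_symm _ _ he)⟩

end FOSet
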